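/- Let ψ : O_amb → ℤ[x_1, …, x_n, t] be the ring homomorphism determined by ψ(a_{ij}) = x_j·t^{i−1} for 1 ≤ i ≤ k+1, 1 ≤ j ≤ n and ψ(z) = t^{k+1}. Then the kernel of ψ is exactly the ideal I_D. -/

import Mathlib

open MvPolynomial

/-- The ambient polynomial ring `ℤ[a_{ij}, z]`, where the variable
`Sum.inl (i₀, j₀)` represents `a_{i₀+1, j₀+1}` (so `1 ≤ i ≤ k+1`, `1 ≤ j ≤ n`)
and `Sum.inr ()` represents `z`. -/
abbrev Oamb (k n : ℕ) := MvPolynomial ((Fin (k + 1) × Fin n) ⊕ Unit) ℤ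

/-- Top row entries of the 2 × n(k+1) matrix `M`: the column `Sum.inl (i₀, j₀)`
(for `1 ≤ i ≤ k`) has top entry `a_{i+1,j}`, and the column `Sum.inr j₀` has top
entry `z·a_{1,j}`. -/
noncomputable def Mtop (k n : ℕ) : (Fin k × Fin n) ⊕ Fin n → Oamb k n
  | .inl (i, j) => X (.inl (i.succ, j))
  | .inr j => X (.inr ()) * X (.inl (0, j))

/-- Bottom row entries of the matrix `M`: the column `Sum.inl (i₀, j₀)` has
bottom entry `a_{i,j}`, and the column `Sum.inr j₀` has bottom entry `a_{k+1,j}`. -/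
noncomputable def Mbot (k n : ℕ) : (Fin k × Fin n) ⊕ Fin n → Oamb k n
  | .inl (i, j) => X (.inl (i.castSucc, j))
  | .inr j => X (.inl (Fin.last k, j))

/-- The ideal `I_D` generated by the 2 × 2 minors of `M`. -/
noncomputable def ID (k n : ℕ) : Ideal (Oamb k n) :=
  Ideal.span {p | ∃ c c', p = Mtop k n c * Mbot k n c' - Mtop k n c' * Mbot k n c}

/-- The ring homomorphism `ψ : O_amb → ℤ[x_1, …, x_n, t]` with
`ψ(a_{ij}) = x_j t^{i-1}` and `ψ(z) = t^{k+1}`, where `Sum.inl j₀` represents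
`x_{j₀+1}` and `Sum.inr ()` represents `t`. -/
noncomputable def ψ (k n : ℕ) : Oamb k n →+* MvPolynomial (Fin n ⊕ Unit) ℤ :=
  (MvPolynomial.aeval (fun v : (Fin (k + 1) × Fin n) ⊕ Unit => match v with
    | .inl (i, j) => X (.inl j) * X (.inr ()) ^ (i : ℕ)
    | .inr _ => X (.inr ()) ^ (k + 1))).toRingHom

namespace Stmt6
variable {k n : ℕ}

/-- exponent vector type -/
abbrev F (k n : ℕ) := ((Fin (k + 1) × Fin n) ⊕ Unit) →₀ ℕ

noncomputable def ee (k : ℕ) (n : ℕ) (i : ℕ) (j : Fin n) : F k n :=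
  Finsupp.single (Sum.inl (⟨min i k, by omega⟩, j)) 1

noncomputable def zz (k n : ℕ) : F k n := Finsupp.single (Sum.inr ()) 1

def Rel (k n : ℕ) (u v : F k n) : Prop :=
  (monomial u 1 : Oamb k n) - monomial v 1 ∈ ID k n

lemma Rel.refl (u : F k n) : Rel k n u u := by
  simp [Rel]

lemma Rel.symm {u v : F k n} (h : Rel k n u v) : Rel k n v u := by
  have := neg_mem h
  simpa [Rel, neg_sub] using this

lemma Rel.trans {u v w : F k n} (h : Rel k n u v) (h' : Rel k n v w) : Rel k n u w := by
  have := add_mem h h'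
  simpa [Rel, sub_add_sub_cancel] using this

lemma Rel.add_left {u v : F k n} (w : F k n) (h : Rel k n u v) : Rel k n (w + u) (w + v) := by
  have := Ideal.mul_mem_left _ (monomial w 1 : Oamb k n) h
  simpa [Rel, mul_sub, monomial_mul] using this

lemma rel_of_eq {u v : F k n} (h : u = v) : Rel k n u v := h ▸ Rel.refl u

/-- exponents of matrix entries -/
noncomputable def mt (k n : ℕ) : (Fin k × Fin n) ⊕ Fin n → F k n
  | .inl (i, j) => Finsupp.single (Sum.inl (i.succ, j)) 1
  | .inr j => zz k n + Finsupp.single (Sum.inl (0, j)) 1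

noncomputable def mb (k n : ℕ) : (Fin k × Fin n) ⊕ Fin n → F k n
  | .inl (i, j) => Finsupp.single (Sum.inl (i.castSucc, j)) 1
  | .inr j => Finsupp.single (Sum.inl (Fin.last k, j)) 1

lemma Mtop_eq (c) : Mtop k n c = monomial (mt k n c) 1 := by
  rcases c with ⟨i, j⟩ | j <;>
    simp [Mtop, mt, zz, X, monomial_mul]

lemma Mbot_eq (c) : Mbot k n c = monomial (mb k n c) 1 := by
  rcases c with ⟨i, j⟩ | j <;> simp [Mbot, mb, X]

lemma rel_gen (c c') : Rel k n (mt k n c + mb k n c') (mt k n c' + mb k n c) := by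
  have : Mtop k n c * Mbot k n c' - Mtop k n c' * Mbot k n c ∈ ID k n :=
    Ideal.subset_span ⟨c, c', rfl⟩
  simpa [Rel, Mtop_eq, Mbot_eq, monomial_mul] using this

lemma ee_eq (i : ℕ) (hi : i ≤ k) (j : Fin n) (h : i < k + 1) :
    ee k n i j = Finsupp.single (Sum.inl (⟨i, h⟩, j)) 1 := by
  simp [ee, Fin.ext_iff, Nat.min_eq_left hi]

lemma move1 (a b : ℕ) (ha : a < k) (hb : b < k) (j j' : Fin n) :
    Rel k n (ee k n (a+1) j + ee k n b j') (ee k n (b+1) j' + ee k n a j) := by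
  have h := rel_gen (k := k) (n := n) (Sum.inl (⟨a, ha⟩, j)) (Sum.inl (⟨b, hb⟩, j'))
  rw [ee_eq (a+1) (by omega) j (by omega), ee_eq b (by omega) j' (by omega),
    ee_eq (b+1) (by omega) j' (by omega), ee_eq a (by omega) j (by omega)]
  simpa [mt, mb, Fin.succ_mk, Fin.castSucc_mk] using h

lemma move2 (a : ℕ) (ha : a < k) (j j' : Fin n) :
    Rel k n (ee k n (a+1) j + ee k n k j') (zz k n + ee k n 0 j' + ee k n a j) := by
  have h := rel_gen (k := k) (n := n) (Sum.inl (⟨a, ha⟩, j)) (Sum.inr j')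
  rw [ee_eq (a+1) (by omega) j (by omega), ee_eq k le_rfl j' (by omega),
    ee_eq 0 (by omega) j' (by omega), ee_eq a (by omega) j (by omega)]
  simpa [mt, mb, Fin.succ_mk, Fin.castSucc_mk, Fin.last, add_assoc] using h

noncomputable def toF (k n : ℕ) (m : ℕ) (s : Multiset (ℕ × Fin n)) : F k n :=
  m • zz k n + (s.map fun p => ee k n p.1 p.2).sum

lemma toF_cons (m : ℕ) (p : ℕ × Fin n) (s : Multiset (ℕ × Fin n)) :
    toF k n m (p ::ₘ s) = ee k n p.1 p.2 + toF k n m s := by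
  simp [toF, Multiset.map_cons, Multiset.sum_cons]
  abel

lemma toF_succ (m : ℕ) (s : Multiset (ℕ × Fin n)) :
    toF k n (m + 1) s = zz k n + toF k n m s := by
  simp [toF, add_smul]
  abel

/-- weight of a multiset -/
def Wm (s : Multiset (ℕ × Fin n)) : ℕ := (s.map Prod.fst).sum

@[simp] lemma Wm_zero : Wm (0 : Multiset (ℕ × Fin n)) = 0 := rfl
@[simp] lemma Wm_cons (p : ℕ × Fin n) (s) : Wm (p ::ₘ s) = p.1 + Wm s := by
  simp [Wm]

def Bdd (k : ℕ) (s : Multiset (ℕ × Fin n)) : Prop := ∀ p ∈ s, p.1 ≤ k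


lemma Rel.cons {u v : Multiset (ℕ × Fin n)} {m m' : ℕ} (p : ℕ × Fin n)
    (h : Rel k n (toF k n m u) (toF k n m' v)) :
    Rel k n (toF k n m (p ::ₘ u)) (toF k n m' (p ::ₘ v)) := by
  rw [toF_cons, toF_cons]; exact Rel.add_left _ h

lemma rel_pair {a b a' b' : ℕ} {j₁ j₂ j₁' j₂' : Fin n} {m : ℕ}
    (s : Multiset (ℕ × Fin n))
    (h : Rel k n (ee k n a j₁ + ee k n b j₂) (ee k n a' j₁' + ee k n b' j₂')) :
    Rel k n (toF k n m ((a, j₁) ::ₘ (b, j₂) ::ₘ s)) (toF k n m ((a', j₁') ::ₘ (b', j₂') ::ₘ s)) := by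
  rw [toF_cons, toF_cons, toF_cons, toF_cons, ← add_assoc, ← add_assoc,
    add_comm (ee k n a j₁ + ee k n b j₂), add_comm (ee k n a' j₁' + ee k n b' j₂')]
  exact Rel.add_left _ h

/-- shift all of the second slot's weight into the first slot -/
lemma shift (b : ℕ) : ∀ (a : ℕ) (j j' : Fin n) (s : Multiset (ℕ × Fin n)) (m : ℕ),
    a + b ≤ k →
    Rel k n (toF k n m ((a, j) ::ₘ (b, j') ::ₘ s)) (toF k n m ((a + b, j) ::ₘ (0, j') ::ₘ s)) := by
  induction b with
  | zero => intro a j j' s m _; exact Rel.refl _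
  | succ b ih =>
    intro a j j' s m hab
    have h1 : Rel k n (toF k n m ((a, j) ::ₘ (b + 1, j') ::ₘ s))
        (toF k n m ((a + 1, j) ::ₘ (b, j') ::ₘ s)) := by
      refine rel_pair s ?_
      have h := (move1 (k := k) (n := n) a b (by omega) (by omega) j j').symm
      exact (rel_of_eq (add_comm (ee k n a j) (ee k n (b+1) j'))).trans h
    refine h1.trans ?_
    have := ih (a + 1) j j' s m (by omega)
    refine this.trans (rel_of_eq (by rw [show a + 1 + b = a + (b+1) by omega]))

/-- shift weight into the first slot until it reaches k -/
lemma shift_cap (c : ℕ) : ∀ (a b : ℕ) (j j' : Fin n) (s : Multiset (ℕ × Fin n)) (m : ℕ),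
    a + c = k → c ≤ b → b ≤ k →
    Rel k n (toF k n m ((a, j) ::ₘ (b, j') ::ₘ s)) (toF k n m ((k, j) ::ₘ (b - c, j') ::ₘ s)) := by
  induction c with
  | zero => intro a b j j' s m hak _ _; subst hak; simpa using Rel.refl _
  | succ c ih =>
    intro a b j j' s m hak hcb hbk
    have hb : b = (b - 1) + 1 := by omega
    have h1 : Rel k n (toF k n m ((a, j) ::ₘ (b, j') ::ₘ s))
        (toF k n m ((a + 1, j) ::ₘ (b - 1, j') ::ₘ s)) := by
      refine rel_pair s ?_
      rw [hb]
      have h := (move1 (k := k) (n := n) a (b-1) (by omega) (by omega) j j').symm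
      exact (rel_of_eq (add_comm (ee k n a j) (ee k n (b-1+1) j'))).trans h
    refine h1.trans ?_
    have := ih (a + 1) (b - 1) j j' s m (by omega) (by omega) (by omega)
    refine this.trans (rel_of_eq (by rw [show b - 1 - c = b - (c + 1) by omega]))

/-- concentrate all weight of `s` into the carrier slot -/
lemma conc (s : Multiset (ℕ × Fin n)) : ∀ (a : ℕ) (j0 : Fin n) (m : ℕ),
    a + Wm s ≤ k →
    Rel k n (toF k n m ((a, j0) ::ₘ s))
      (toF k n m ((a + Wm s, j0) ::ₘ s.map (fun p => (0, p.2)))) := by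
  induction s using Multiset.induction with
  | empty => intro a j0 m _; simpa using Rel.refl _
  | cons p s ih =>
    rcases p with ⟨b, j'⟩
    intro a j0 m h
    rw [Wm_cons] at h
    have h1 : Rel k n (toF k n m ((a, j0) ::ₘ (b, j') ::ₘ s))
        (toF k n m ((b, j') ::ₘ (a + Wm s, j0) ::ₘ s.map (fun p => (0, p.2)))) := by
      rw [Multiset.cons_swap]
      exact Rel.cons _ (ih a j0 m (by omega))
    refine h1.trans ?_
    rw [Multiset.cons_swap]
    have h2 := shift (k := k) (n := n) b (a + Wm s) j0 j' (s.map (fun p => (0, p.2))) m (by omega)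
    refine h2.trans (rel_of_eq ?_)
    rw [Multiset.map_cons, Wm_cons, show a + Wm s + b = a + (b + Wm s) from by omega]

lemma exists_pos {s : Multiset (ℕ × Fin n)} (h : 0 < Wm s) :
    ∃ a j t, s = (a + 1, j) ::ₘ t := by
  by_contra hc
  push_neg at hc
  have : ∀ p ∈ s, p.1 = 0 := by
    intro p hp
    by_contra hp1
    obtain ⟨a, ha⟩ : ∃ a, p.1 = a + 1 := ⟨p.1 - 1, by omega⟩
    refine hc a p.2 (s.erase p) ?_
    rw [← ha, ← Prod.mk.eta (p := p)]
    exact (Multiset.cons_erase hp).symm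
  have : Wm s = 0 := by
    simp only [Wm]
    rw [Multiset.sum_eq_zero]
    intro x hx
    obtain ⟨p, hp, rfl⟩ := Multiset.mem_map.mp hx
    exact this p hp
  omega

/-- fill the carrier up to weight `k`, given enough weight around -/
lemma fill (s : Multiset (ℕ × Fin n)) : ∀ (a : ℕ) (j : Fin n) (m : ℕ),
    a ≤ k → k ≤ a + Wm s → Bdd k s →
    ∃ s', Rel k n (toF k n m ((a, j) ::ₘ s)) (toF k n m ((k, j) ::ₘ s')) ∧
      Wm s' = a + Wm s - k ∧ Bdd k s' ∧ s'.map Prod.snd = s.map Prod.snd := by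
  induction s using Multiset.induction with
  | empty =>
    intro a j m hak hka _
    have : a = k := by simp [Wm] at hka ⊢; omega
    subst this
    exact ⟨0, Rel.refl _, by simp, by intro p hp; simp at hp, rfl⟩
  | cons p s ih =>
    rcases p with ⟨b, j₂⟩
    intro a j m hak hka hbdd
    have hb : b ≤ k := hbdd (b, j₂) (Multiset.mem_cons_self _ _)
    have hbdds : Bdd k s := fun q hq => hbdd q (Multiset.mem_cons_of_mem hq)
    rw [Wm_cons] at hka
    by_cases hc : k ≤ a + b
    · -- cap within the pair
      refine ⟨(b - (k - a), j₂) ::ₘ s, ?_, ?_, ?_, ?_⟩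
      · exact shift_cap (k - a) a b j j₂ s m (by omega) (by omega) hb
      · rw [Wm_cons, Wm_cons]; omega
      · intro q hq
        rcases Multiset.mem_cons.mp hq with rfl | hq
        · simp; omega
        · exact hbdds q hq
      · simp
    · -- move all of b, then recurse
      push_neg at hc
      have h1 : Rel k n (toF k n m ((a, j) ::ₘ (b, j₂) ::ₘ s))
          (toF k n m ((a + b, j) ::ₘ (0, j₂) ::ₘ s)) := shift b a j j₂ s m (by omega)
      obtain ⟨s', hrel, hw, hbdd', hsnd⟩ := ih (a + b) j m (by omega) (by omega) hbdds
      refine ⟨(0, j₂) ::ₘ s', ?_, ?_, ?_, ?_⟩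
      · refine h1.trans ?_
        rw [Multiset.cons_swap, Multiset.cons_swap (k, j)]
        exact Rel.cons _ hrel
      · rw [Wm_cons, Wm_cons]; omega
      · intro q hq
        rcases Multiset.mem_cons.mp hq with rfl | hq
        · simp
        · exact hbdd' q hq
      · simp [hsnd]

lemma rel_pair2 {a b a' b' : ℕ} {j₁ j₂ j₁' j₂' : Fin n} {m : ℕ}
    (t : Multiset (ℕ × Fin n))
    (h : Rel k n (ee k n a j₁ + ee k n b j₂) (zz k n + ee k n a' j₁' + ee k n b' j₂')) :
    Rel k n (toF k n m ((a, j₁) ::ₘ (b, j₂) ::ₘ t))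
      (toF k n (m + 1) ((a', j₁') ::ₘ (b', j₂') ::ₘ t)) := by
  rw [toF_cons, toF_cons, toF_cons, toF_cons, toF_succ]
  have h2 := Rel.add_left (toF k n m t) h
  refine (rel_of_eq ?_).trans (h2.trans (rel_of_eq ?_)) <;> abel

def Zm (c : Multiset (Fin n)) (j0 : Fin n) : Multiset (ℕ × Fin n) :=
  (c.erase j0).map fun j => (0, j)

lemma drain (Wv : ℕ) : ∀ (s : Multiset (ℕ × Fin n)) (m : ℕ) (j0 : Fin n),
    Bdd k s → Wm s = Wv → j0 ∈ s.map Prod.snd →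
    Rel k n (toF k n m s)
      (toF k n (m + Wm s / (k+1)) ((Wm s % (k+1), j0) ::ₘ Zm (s.map Prod.snd) j0)) := by
  induction Wv using Nat.strong_induction_on with
  | _ Wv ih =>
    intro s m j0 hbdd hW hj0
    by_cases hWk : Wm s ≤ k
    · -- terminal case: concentrate onto a j0-slot
      obtain ⟨p, hp, hp2⟩ := Multiset.mem_map.mp hj0
      have hs : s = (p.1, j0) ::ₘ s.erase p := by
        rw [← hp2, Prod.mk.eta]
        exact (Multiset.cons_erase hp).symm
      set t := s.erase p with ht
      have hWs : Wm s = p.1 + Wm t := by rw [hs, Wm_cons]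
      have h1 := conc (k := k) t p.1 j0 m (by omega)
      rw [← hs] at h1
      refine h1.trans (rel_of_eq ?_)
      have e1 : p.1 + Wm t = Wm s := hWs.symm
      have e2 : Wm s % (k+1) = Wm s := Nat.mod_eq_of_lt (by omega)
      have e3 : Wm s / (k+1) = 0 := Nat.div_eq_of_lt (by omega)
      rw [e1, e2, e3, add_zero]
      congr 1
      have e4 : s.map Prod.snd = j0 ::ₘ t.map Prod.snd := by
        conv_lhs => rw [hs]
        simp
      rw [e4]
      simp [Zm, Multiset.map_map]
    · -- drain one z out
      push_neg at hWk
      obtain ⟨a0, j1, t, hs⟩ := exists_pos (s := s) (by omega)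
      have hbddt : Bdd k t := by
        intro q hq; exact hbdd q (by rw [hs]; exact Multiset.mem_cons_of_mem hq)
      have ha0k : a0 + 1 ≤ k := hbdd (a0+1, j1) (by rw [hs]; exact Multiset.mem_cons_self _ _)
      have hWs : Wm s = (a0+1) + Wm t := by rw [hs, Wm_cons]
      obtain ⟨s', hrel, hw', hbdd', hsnd⟩ :=
        fill (k := k) t (a0+1) j1 m ha0k (by omega) hbddt
      rw [← hs] at hrel
      have hWs' : Wm s' = Wm s - k := by omega
      obtain ⟨c, j2, t2, hs'⟩ := exists_pos (s := s') (by omega)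
      have hck : c < k := by
        have := hbdd' (c+1, j2) (by rw [hs']; exact Multiset.mem_cons_self _ _)
        omega
      have h2 : Rel k n (toF k n m ((k, j1) ::ₘ s')) (toF k n (m+1) ((0, j1) ::ₘ (c, j2) ::ₘ t2)) := by
        rw [hs']
        refine (rel_of_eq (by rw [Multiset.cons_swap])).trans ?_
        exact rel_pair2 t2 (move2 c hck j2 j1)
      set s'' : Multiset (ℕ × Fin n) := (0, j1) ::ₘ (c, j2) ::ₘ t2 with hs''
      have hWs'' : Wm s'' = Wm s - (k+1) := by
        have : Wm s' = (c+1) + Wm t2 := by rw [hs', Wm_cons]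
        simp only [hs'', Wm_cons]
        omega
      have hbdd'' : Bdd k s'' := by
        intro q hq
        simp only [hs''] at hq
        rcases Multiset.mem_cons.mp hq with rfl | hq
        · simp
        rcases Multiset.mem_cons.mp hq with rfl | hq
        · simp; omega
        · exact hbdd' q (by rw [hs']; exact Multiset.mem_cons_of_mem hq)
      have hsnd'' : s''.map Prod.snd = s.map Prod.snd := by
        have h1 : s'.map Prod.snd = j2 ::ₘ t2.map Prod.snd := by rw [hs']; simp
        have h2 : s.map Prod.snd = j1 ::ₘ t.map Prod.snd := by rw [hs]; simp
        simp only [hs'', Multiset.map_cons]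
        rw [h2, ← hsnd, h1]
      have hj0'' : j0 ∈ s''.map Prod.snd := by rw [hsnd'']; exact hj0
      have h3 := ih (Wm s'') (by omega) s'' (m+1) j0 hbdd'' rfl hj0''
      refine (hrel.trans h2).trans (h3.trans (rel_of_eq ?_))
      rw [hsnd'', hWs'']
      have hk1 : Wm s = (Wm s - (k+1)) + (k+1) := by omega
      congr 1
      · rw [add_assoc]
        congr 1
        conv_rhs => rw [hk1]
        rw [Nat.add_div_right _ (Nat.succ_pos k)]
        simp [Nat.succ_eq_add_one]
        omega
      · congr 2
        conv_rhs => rw [hk1]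
        rw [Nat.add_mod_right]


/-- column degree -/
def dd (k n : ℕ) (u : F k n) (j : Fin n) : ℕ := ∑ i : Fin (k+1), u (Sum.inl (i, j))

/-- total t-degree -/
def Nv (k n : ℕ) (u : F k n) : ℕ :=
  (k+1) * u (Sum.inr ()) + ∑ p : Fin (k+1) × Fin n, (p.1 : ℕ) * u (Sum.inl p)

lemma dd_add (u v : F k n) (j : Fin n) : dd k n (u + v) j = dd k n u j + dd k n v j := by
  simp [dd, Finsupp.add_apply, Finset.sum_add_distrib]

lemma Nv_add (u v : F k n) : Nv k n (u + v) = Nv k n u + Nv k n v := by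
  simp [Nv, Finsupp.add_apply, Finset.sum_add_distrib, mul_add]
  ring

lemma dd_zz (j : Fin n) : dd k n (zz k n) j = 0 := by
  simp [dd, zz, Finsupp.single_apply]

lemma Nv_zz : Nv k n (zz k n) = k + 1 := by
  simp [Nv, zz, Finsupp.single_apply]

lemma dd_ee (a : ℕ) (j' j : Fin n) : dd k n (ee k n a j') j = if j' = j then 1 else 0 := by
  by_cases hj : j' = j
  · subst hj
    simp [dd, ee, Finsupp.single_apply]
  · simp [dd, ee, Finsupp.single_apply, hj]

lemma Nv_ee (a : ℕ) (ha : a ≤ k) (j : Fin n) : Nv k n (ee k n a j) = a := by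
  simp [Nv, ee, Finsupp.single_apply, mul_ite, Finset.sum_ite_eq, Nat.min_eq_left ha]

lemma dd_smul (c : ℕ) (u : F k n) (j : Fin n) : dd k n (c • u) j = c * dd k n u j := by
  induction c with
  | zero => simp [dd]
  | succ c ih => rw [succ_nsmul, dd_add, ih]; ring

lemma Nv_smul (c : ℕ) (u : F k n) : Nv k n (c • u) = c * Nv k n u := by
  induction c with
  | zero => simp [Nv]
  | succ c ih => rw [succ_nsmul, Nv_add, ih]; ring

lemma dd_toF (m : ℕ) (s : Multiset (ℕ × Fin n)) (j : Fin n) :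
    dd k n (toF k n m s) j = (s.map Prod.snd).count j := by
  induction s using Multiset.induction with
  | empty => simp [toF, dd_smul, dd_zz]
  | cons p s ih =>
    rw [toF_cons, dd_add, dd_ee, ih, Multiset.map_cons, Multiset.count_cons]
    split_ifs with h1 h2 h2
    · omega
    · exact absurd h1.symm h2
    · exact absurd h2.symm h1
    · omega

lemma Nv_toF (m : ℕ) (s : Multiset (ℕ × Fin n)) (hbdd : Bdd k s) :
    Nv k n (toF k n m s) = (k+1) * m + Wm s := by
  induction s using Multiset.induction with
  | empty => simp [toF, Nv_smul, Nv_zz, Wm]; ring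
  | cons p s ih =>
    rw [toF_cons, Nv_add, Nv_ee p.1 (hbdd p (Multiset.mem_cons_self _ _)) p.2,
      ih (fun q hq => hbdd q (Multiset.mem_cons_of_mem hq)), Wm_cons]
    ring

lemma exists_repr (u : F k n) : ∃ m s, Bdd k s ∧ u = toF k n m s := by
  induction u using Finsupp.induction with
  | zero => exact ⟨0, 0, by intro p hp; simp at hp, by simp [toF]⟩
  | single_add x c f _ _ ih =>
    obtain ⟨m, s, hbdd, rfl⟩ := ih
    rcases x with ⟨i, j⟩ | ⟨⟩
    · refine ⟨m, Multiset.replicate c ((i : ℕ), j) + s, ?_, ?_⟩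
      · intro p hp
        rcases Multiset.mem_add.mp hp with hp | hp
        · rw [Multiset.eq_of_mem_replicate hp]; exact Nat.lt_succ_iff.mp i.isLt
        · exact hbdd p hp
      · have h1 : Finsupp.single (Sum.inl (i, j)) c = c • ee k n (i : ℕ) j := by
          rw [ee]
          rw [Finsupp.smul_single]
          congr 2
          · congr 1
            exact (Fin.ext (by simp [Nat.min_eq_left (Nat.lt_succ_iff.mp i.isLt)])).symm
          · simp
        rw [h1]
        simp only [toF, Multiset.map_add, Multiset.sum_add, Multiset.map_replicate,
          Multiset.sum_replicate]
        abel
    · refine ⟨m + c, s, hbdd, ?_⟩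
      have h1 : Finsupp.single (Sum.inr ()) c = c • zz k n := by
        rw [zz, Finsupp.smul_single]; simp
      rw [h1]
      simp only [toF, add_smul]
      abel


lemma single_inl_eq (i : Fin (k+1)) (j : Fin n) (c : ℕ) :
    Finsupp.single (Sum.inl (i, j)) c = c • ee k n (i : ℕ) j := by
  rw [ee, Finsupp.smul_single]
  congr 2
  · congr 1
    exact (Fin.ext (by simp [Nat.min_eq_left (Nat.lt_succ_iff.mp i.isLt)])).symm
  · simp

lemma single_inr_eq (c : ℕ) :
    (Finsupp.single (Sum.inr ()) c : F k n) = c • zz k n := by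
  rw [zz, Finsupp.smul_single]; simp

noncomputable def Einv (k n : ℕ) (u : F k n) : (Fin n ⊕ Unit) →₀ ℕ :=
  Finsupp.equivFunOnFinite.symm (Sum.elim (fun j => dd k n u j) (fun _ => Nv k n u))

lemma Einv_inl (u : F k n) (j : Fin n) : Einv k n u (Sum.inl j) = dd k n u j := by
  simp [Einv]

lemma Einv_inr (u : F k n) (t : Unit) : Einv k n u (Sum.inr t) = Nv k n u := by
  simp [Einv]

lemma psi_apply (p : Oamb k n) :
    ψ k n p = aeval (fun v : (Fin (k + 1) × Fin n) ⊕ Unit => match v with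
      | .inl (i, j) => X (.inl j) * X (.inr ()) ^ (i : ℕ)
      | .inr _ => X (.inr ()) ^ (k + 1)) p := rfl

lemma psi_monomial (c : ℤ) (u : F k n) :
    ψ k n (monomial u c) = monomial (Einv k n u) c := by
  induction u using Finsupp.induction with
  | zero =>
    have h0 : Einv k n 0 = 0 := by
      ext y
      rcases y with j' | t <;> simp [Einv, dd, Nv]
    rw [h0]
    rw [show ((monomial (0 : F k n)) c) = C c from by simp [monomial_zero'],
      show ((monomial (0 : (Fin n ⊕ Unit) →₀ ℕ)) c) = C c from by simp [monomial_zero']]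
    rw [psi_apply, aeval_C, algebraMap_eq]
  | single_add x e f hx he ih =>
    rw [monomial_single_add, map_mul, map_pow, ih]
    rcases x with ⟨i, j⟩ | ⟨⟩
    · have hX : ψ k n (X (Sum.inl (i, j))) =
          monomial (Finsupp.single (Sum.inl j) 1 + Finsupp.single (Sum.inr ()) (i : ℕ)) 1 := by
        rw [psi_apply, aeval_X]
        simp only []
        rw [X_pow_eq_monomial]
        simp [X, monomial_mul]
      rw [hX, monomial_pow, one_pow, monomial_mul, one_mul]
      have hkey : Finsupp.single (Sum.inl (i, j)) e + f
          = e • ee k n (i : ℕ) j + f := by rw [single_inl_eq]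
      have hE : Einv k n (Finsupp.single (Sum.inl (i, j)) e + f)
          = e • (Finsupp.single (Sum.inl j) 1 + Finsupp.single (Sum.inr ()) (i : ℕ))
            + Einv k n f := by
        ext y
        rcases y with j' | t
        · rw [Einv_inl, hkey, dd_add, dd_smul, dd_ee]
          simp [Finsupp.add_apply, Finsupp.smul_apply, Finsupp.single_apply, Einv_inl]
        · rw [Einv_inr, hkey, Nv_add, Nv_smul, Nv_ee (i : ℕ) (Nat.lt_succ_iff.mp i.isLt)]
          simp [Finsupp.add_apply, Finsupp.smul_apply, Finsupp.single_apply, Einv_inr]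
          try ring
      rw [hE]
    · have hX : ψ k n (X (Sum.inr ())) =
          monomial (Finsupp.single (Sum.inr ()) (k+1) : (Fin n ⊕ Unit) →₀ ℕ) 1 := by
        rw [psi_apply, aeval_X]
        simp only []
        rw [X_pow_eq_monomial]
      rw [hX, monomial_pow, one_pow, monomial_mul, one_mul]
      have hkey : (Finsupp.single (Sum.inr ()) e : F k n) + f
          = e • zz k n + f := by rw [single_inr_eq]
      have hE : Einv k n (Finsupp.single (Sum.inr ()) e + f)
          = e • (Finsupp.single (Sum.inr ()) (k+1) : (Fin n ⊕ Unit) →₀ ℕ)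
            + Einv k n f := by
        ext y
        rcases y with j' | t
        · rw [Einv_inl, hkey, dd_add, dd_smul, dd_zz]
          simp [Finsupp.add_apply, Finsupp.smul_apply, Finsupp.single_apply, Einv_inl]
        · rw [Einv_inr, hkey, Nv_add, Nv_smul, Nv_zz]
          simp [Finsupp.add_apply, Finsupp.smul_apply, Finsupp.single_apply, Einv_inr]
          try ring
      rw [hE]

/-- monomials with equal invariants are related -/
lemma rel_of_inv {u v : F k n} (h : Einv k n u = Einv k n v) : Rel k n u v := by
  have hdd : ∀ j, dd k n u j = dd k n v j := fun j => by
    rw [← Einv_inl, ← Einv_inl, h]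
  have hN : Nv k n u = Nv k n v := by rw [← Einv_inr u (), ← Einv_inr v (), h]
  obtain ⟨mu, su, hbu, rfl⟩ := exists_repr u
  obtain ⟨mv, sv, hbv, rfl⟩ := exists_repr v
  have hsnd : su.map Prod.snd = sv.map Prod.snd := by
    refine Multiset.ext.mpr fun j => ?_
    rw [← dd_toF mu su j, ← dd_toF mv sv j, hdd j]
  have hNu : (k+1) * mu + Wm su = (k+1) * mv + Wm sv := by
    rw [← Nv_toF mu su hbu, ← Nv_toF mv sv hbv, hN]
  by_cases hc : su.map Prod.snd = 0
  · have hsu : su = 0 := Multiset.map_eq_zero.mp hc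
    have hsv : sv = 0 := Multiset.map_eq_zero.mp (by rw [← hsnd]; exact hc)
    subst hsu hsv
    have : mu = mv := by
      simp only [Wm_zero, add_zero] at hNu
      exact Nat.eq_of_mul_eq_mul_left (Nat.succ_pos k) hNu
    rw [this]
    exact Rel.refl _
  · obtain ⟨j0, hj0⟩ := Multiset.exists_mem_of_ne_zero hc
    have h1 := drain (Wm su) su mu j0 hbu rfl hj0
    have h2 := drain (Wm sv) sv mv j0 hbv rfl (by rw [← hsnd]; exact hj0)
    refine (h1.trans (rel_of_eq ?_)).trans h2.symm
    rw [hsnd]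
    congr 1
    · have d1 : mu + Wm su / (k+1) = ((k+1) * mu + Wm su) / (k+1) := by
        rw [Nat.mul_add_div (by omega)]
      have d2 : mv + Wm sv / (k+1) = ((k+1) * mv + Wm sv) / (k+1) := by
        rw [Nat.mul_add_div (by omega)]
      rw [d1, d2, hNu]
    · congr 2
      have m1 : Wm su % (k+1) = ((k+1) * mu + Wm su) % (k+1) := by rw [Nat.mul_add_mod]
      have m2 : Wm sv % (k+1) = ((k+1) * mv + Wm sv) % (k+1) := by rw [Nat.mul_add_mod]
      rw [m1, m2, hNu]


lemma psi_C (c : ℤ) : ψ k n (C c) = C c := by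
  rw [psi_apply, aeval_C, algebraMap_eq]

lemma mem_ID_of_psi_zero (N : ℕ) : ∀ (p : Oamb k n), p.support.card ≤ N → ψ k n p = 0 →
    p ∈ ID k n := by
  induction N with
  | zero =>
    intro p hcard _
    have : p.support = ∅ := Finset.card_eq_zero.mp (Nat.le_zero.mp hcard)
    have : p = 0 := by
      ext m
      by_contra hm
      exact absurd (MvPolynomial.mem_support_iff.mpr (by simpa using hm)) (by simp [this])
    simp [this]
  | succ N ih =>
    intro p hcard hker
    rcases Finset.eq_empty_or_nonempty p.support with hemp | ⟨u, hu⟩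
    · have : p = 0 := by
        ext m
        by_contra hm
        exact absurd (MvPolynomial.mem_support_iff.mpr (by simpa using hm)) (by simp [hemp])
      simp [this]
    · have hψsum : ∑ v ∈ p.support, (monomial (Einv k n v) (coeff v p)
          : MvPolynomial (Fin n ⊕ Unit) ℤ) = 0 := by
        rw [← hker]
        conv_rhs => rw [← support_sum_monomial_coeff p]
        rw [map_sum]
        exact Finset.sum_congr rfl fun v _ => (psi_monomial (coeff v p) v).symm
      have hcoeffsum : ∑ v ∈ p.support,
          (if Einv k n v = Einv k n u then coeff v p else 0) = 0 := by
        have := congrArg (coeff (Einv k n u)) hψsum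
        rw [MvPolynomial.coeff_sum] at this
        simpa [coeff_monomial] using this
      have hex : ∃ v ∈ p.support, v ≠ u ∧ Einv k n v = Einv k n u := by
        by_contra hc
        push_neg at hc
        have heq := Finset.sum_eq_single_of_mem
          (f := fun v => if Einv k n v = Einv k n u then coeff v p else 0) u hu
          (fun v hv hvu => by simp [hc v hv hvu])
        simp only [if_pos rfl] at heq
        rw [heq] at hcoeffsum
        exact absurd hcoeffsum (MvPolynomial.mem_support_iff.mp hu)
      obtain ⟨v, hv, hvu, hEvu⟩ := hex
      set g : Oamb k n := (monomial u 1 : Oamb k n) - monomial v 1 with hg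
      have hgID : g ∈ ID k n := rel_of_inv hEvu.symm
      set q : Oamb k n := p - C (coeff u p) * g with hq
      have hqker : ψ k n q = 0 := by
        rw [hq, map_sub, map_mul, psi_C, hg, map_sub, psi_monomial, psi_monomial, hEvu,
          sub_self, mul_zero, sub_zero, hker]
      have hqsupp : q.support ⊆ p.support.erase u := by
        intro w hw
        have hwcoeff := MvPolynomial.mem_support_iff.mp hw
        rw [hq, hg] at hwcoeff
        simp only [coeff_sub, MvPolynomial.coeff_C_mul, mul_sub, coeff_monomial, mul_ite,
          mul_one, mul_zero] at hwcoeff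
        rcases eq_or_ne w u with rfl | hwu
        · exfalso
          apply hwcoeff
          rw [if_pos rfl, if_neg hvu]
          ring
        · rw [Finset.mem_erase]
          refine ⟨hwu, MvPolynomial.mem_support_iff.mpr fun h0 => ?_⟩
          rcases eq_or_ne v w with rfl | hvw
          · exact absurd h0 (MvPolynomial.mem_support_iff.mp hv)
          · apply hwcoeff
            rw [h0, if_neg (fun h => hwu h.symm), if_neg hvw]
            ring
      have hqcard : q.support.card ≤ N := by
        have h1 := Finset.card_le_card hqsupp
        have h2 := Finset.card_erase_of_mem hu
        omega
      have hqID := ih q hqcard hqker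
      have : p = q + C (coeff u p) * g := by rw [hq]; ring
      rw [this]
      exact Ideal.add_mem _ hqID (Ideal.mul_mem_left _ _ hgID)

end Stmt6


theorem stmt_6 (k n : ℕ) (hk : 1 ≤ k) (hn : 2 ≤ n) :
    RingHom.ker (ψ k n) = ID k n := by
  apply le_antisymm
  · intro p hp
    exact Stmt6.mem_ID_of_psi_zero p.support.card p le_rfl (RingHom.mem_ker.mp hp)
  · rw [ID, Ideal.span_le]
    rintro p ⟨c, c', rfl⟩
    rw [SetLike.mem_coe, RingHom.mem_ker, map_sub, map_mul, map_mul]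
    rcases c with ⟨i, j⟩ | j <;> rcases c' with ⟨i', j'⟩ | j' <;>
      simp [Mtop, Mbot, Stmt6.psi_apply, aeval_X, Fin.val_succ, Fin.coe_castSucc,
        Fin.val_last, Fin.val_zero, map_mul] <;> ring
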